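/- For the Ewens-weighted game of best choice, the weighted count W(N,k) of k-winnable permutations satisfies the recurrence W(N,k) = (N−1)·W(N−1,k) + ((N−2)!/(k−1)!)·θ·[θ(θ+1)···(θ+k−1)], for 1 ≤ k < N, with W(1,0) = θ and W(N,N) = 0. -/

import Mathlib

/-- Number of left-to-right maxima of the permutation `π` (one-line notation
`i ↦ π i`): positions `j` such that `π i < π j` for all `i < j`. -/
def lrmaxCount {N : ℕ} (π : Equiv.Perm (Fin N)) : ℕ :=
  (Finset.univ.filter (fun j : Fin N => ∀ i, i < j → π i < π j)).card

/-- Number of inversions of `π`: pairs of positions `i < j` with `π i > π j`. -/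
def invCount {N : ℕ} (π : Equiv.Perm (Fin N)) : ℕ :=
  (Finset.univ.filter (fun p : Fin N × Fin N => p.1 < p.2 ∧ π p.2 < π p.1)).card

/-- Position `j` is a left-to-right maximum of `π`. -/
def IsLRMax {N : ℕ} (π : Equiv.Perm (Fin N)) (j : Fin N) : Prop :=
  ∀ i, i < j → π i < π j

/-- `π` is `k`-winnable: the positional strategy that rejects the first `k`
candidates (positions `0,…,k-1`) and accepts the next left-to-right maximum
thereafter selects the position of the maximal value. -/
def KWinnable {N : ℕ} (k : ℕ) (π : Equiv.Perm (Fin N)) : Prop :=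
  ∃ j : Fin N, k ≤ (j : ℕ) ∧ IsLRMax π j ∧ (∀ i, π i ≤ π j) ∧
    ∀ i : Fin N, k ≤ (i : ℕ) → i < j → ¬ IsLRMax π i

open Classical in
/-- Ewens-weighted count of `k`-winnable permutations:
`W(N,k) = Σ_{k-winnable π ∈ S_N} θ^{lrmax(π)}`. -/
noncomputable def W (R : Type*) [CommRing R] (N k : ℕ) (θ : R) : R :=
  ∑ π ∈ Finset.univ.filter (fun π : Equiv.Perm (Fin N) => KWinnable k π),
    θ ^ lrmaxCount π


open Equiv Finset

theorem Equiv.Perm.apply_inv_self {α : Type*} (f : Perm α) (x : α) : f (f⁻¹ x) = x :=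
  f.apply_symm_apply x

namespace EwensAux

variable {n : ℕ}

def insPerm (σ : Perm (Fin n)) (p v : Fin (n + 1)) : Perm (Fin (n + 1)) where
  toFun := p.insertNth v fun j => v.succAbove (σ j)
  invFun := v.insertNth p fun j => p.succAbove (σ⁻¹ j)
  left_inv i := by
    rcases eq_or_ne i p with rfl | h
    · simp
    · obtain ⟨j, rfl⟩ := Fin.exists_succAbove_eq h
      simp
  right_inv i := by
    rcases eq_or_ne i v with rfl | h
    · simp
    · obtain ⟨j, rfl⟩ := Fin.exists_succAbove_eq h
      simp

@[simp] lemma insPerm_apply_same (σ : Perm (Fin n)) (p v : Fin (n + 1)) :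
    insPerm σ p v p = v := by
  simp [insPerm, Equiv.coe_fn_mk]

@[simp] lemma insPerm_apply_succAbove (σ : Perm (Fin n)) (p v : Fin (n + 1)) (j : Fin n) :
    insPerm σ p v (p.succAbove j) = v.succAbove (σ j) := by
  simp [insPerm, Equiv.coe_fn_mk]

lemma insPerm_injective (p : Fin (n + 1)) :
    Function.Injective (fun x : Fin (n + 1) × Perm (Fin n) => insPerm x.2 p x.1) := by
  rintro ⟨v, σ⟩ ⟨w, τ⟩ h
  simp only at h
  have hv : v = w := by
    have := congrArg (fun f : Perm (Fin (n+1)) => f p) h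
    simpa using this
  subst hv
  have hσ : σ = τ := by
    apply Equiv.ext; intro j
    apply Fin.succAbove_right_injective (p := v)
    have := congrArg (fun f : Perm (Fin (n+1)) => f (p.succAbove j)) h
    simpa using this
  rw [hσ]

lemma insPerm_bijective (p : Fin (n + 1)) :
    Function.Bijective (fun x : Fin (n + 1) × Perm (Fin n) => insPerm x.2 p x.1) := by
  rw [Fintype.bijective_iff_injective_and_card]
  refine ⟨insPerm_injective p, ?_⟩
  simp [Fintype.card_perm, Nat.factorial_succ]

open Classical in
lemma lrmaxCount_eq {N : ℕ} (π : Perm (Fin N)) :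
    lrmaxCount π = ∑ j : Fin N, if IsLRMax π j then 1 else 0 := by
  rw [lrmaxCount, Finset.card_filter]
  exact Finset.sum_congr rfl fun j _ => if_congr Iff.rfl rfl rfl

lemma kWinnable_iff (k : ℕ) (π : Perm (Fin (n + 1))) :
    KWinnable k π ↔ k ≤ ((π⁻¹ (Fin.last n) : Fin (n + 1)) : ℕ) ∧
      ∀ i : Fin (n + 1), k ≤ (i : ℕ) → i < π⁻¹ (Fin.last n) → ¬ IsLRMax π i := by
  constructor
  · rintro ⟨j, hkj, _, hmax, hni⟩
    have hj : π j = Fin.last n := by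
      refine le_antisymm (Fin.le_last _) ?_
      simpa using hmax (π⁻¹ (Fin.last n))
    have hjj : π⁻¹ (Fin.last n) = j := by rw [← hj]; simp
    rw [hjj]; exact ⟨hkj, hni⟩
  · rintro ⟨hk, hni⟩
    refine ⟨π⁻¹ (Fin.last n), hk, ?_, ?_, hni⟩
    · intro i hi
      rw [Equiv.Perm.apply_inv_self]
      refine lt_of_le_of_ne (Fin.le_last _) fun h => ?_
      exact absurd (π.injective (h.trans (π.apply_inv_self _).symm)) (ne_of_lt hi)
    · intro i; rw [Equiv.Perm.apply_inv_self]; exact Fin.le_last _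

lemma isLRMax_insPerm_iff (σ : Perm (Fin n)) (p v : Fin (n + 1)) (j : Fin n)
    (H : p ≤ j.castSucc → v ≤ (σ j).castSucc) :
    IsLRMax (insPerm σ p v) (p.succAbove j) ↔ IsLRMax σ j := by
  constructor
  · intro h i hij
    have := h (p.succAbove i) (Fin.succAbove_lt_succAbove_iff.mpr hij)
    rw [insPerm_apply_succAbove, insPerm_apply_succAbove] at this
    exact Fin.succAbove_lt_succAbove_iff.mp this
  · intro h i hi
    rcases eq_or_ne i p with rfl | hne
    · rw [insPerm_apply_same, insPerm_apply_succAbove]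
      have hp : i ≤ j.castSucc := (Fin.lt_succAbove_iff_le_castSucc i j).mp hi
      exact (Fin.lt_succAbove_iff_le_castSucc v (σ j)).mpr (H hp)
    · obtain ⟨i', rfl⟩ := Fin.exists_succAbove_eq hne
      rw [insPerm_apply_succAbove, insPerm_apply_succAbove]
      exact Fin.succAbove_lt_succAbove_iff.mpr (h i' (Fin.succAbove_lt_succAbove_iff.mp hi))

open Classical in
lemma lrmaxCount_insPerm (σ : Perm (Fin n)) (p v : Fin (n + 1))
    (H : ∀ j, p ≤ j.castSucc → v ≤ (σ j).castSucc) :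
    lrmaxCount (insPerm σ p v)
      = lrmaxCount σ + if IsLRMax (insPerm σ p v) p then 1 else 0 := by
  rw [lrmaxCount_eq, lrmaxCount_eq, Fin.sum_univ_succAbove _ p, add_comm]
  congr 1
  exact Finset.sum_congr rfl fun j _ => by rw [isLRMax_insPerm_iff σ p v j (H j)]


lemma sum_transfer {p : Fin (n + 1)} {P : Perm (Fin (n + 1)) → Prop}
    {Q : Fin (n + 1) → Perm (Fin n) → Prop}
    [DecidablePred P] [DecidablePred (fun x : Fin (n + 1) × Perm (Fin n) => Q x.1 x.2)]
    {F : Perm (Fin (n + 1)) → ℝ} {G : Fin (n + 1) → Perm (Fin n) → ℝ}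
    (hPQ : ∀ v σ, P (insPerm σ p v) ↔ Q v σ)
    (hFG : ∀ v σ, Q v σ → F (insPerm σ p v) = G v σ) :
    ∑ π ∈ univ.filter P, F π
      = ∑ x ∈ univ.filter (fun x : Fin (n + 1) × Perm (Fin n) => Q x.1 x.2), G x.1 x.2 := by
  symm
  apply Finset.sum_bij (i := fun (x : Fin (n + 1) × Perm (Fin n)) _ => insPerm x.2 p x.1)
  · intro x hx
    simp only [mem_filter, mem_univ, true_and] at hx ⊢
    exact (hPQ x.1 x.2).mpr hx
  · intro a _ b _ h
    exact insPerm_injective p h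
  · intro π hπ
    obtain ⟨x, hx⟩ := (insPerm_bijective p).surjective π
    simp only at hx
    refine ⟨x, ?_, hx⟩
    simp only [mem_filter, mem_univ, true_and] at hπ ⊢
    exact (hPQ x.1 x.2).mp (by rwa [hx])
  · intro x hx
    simp only [mem_filter, mem_univ, true_and] at hx
    exact (hFG x.1 x.2 hx).symm

noncomputable def Rsum (k : ℕ) (θ : ℝ) : ℝ := ∑ σ : Perm (Fin k), θ ^ lrmaxCount σ

lemma Rsum_zero (θ : ℝ) : Rsum 0 θ = 1 := by
  rw [Rsum]
  have h1 : ∀ σ : Perm (Fin 0), lrmaxCount σ = 0 := fun σ => by rw [lrmaxCount]; simp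
  simp only [h1, pow_zero]
  simp [Fintype.card_perm]

open Classical in
lemma lrmaxCount_insPerm_zero (σ : Perm (Fin n)) (p : Fin (n + 1)) :
    lrmaxCount (insPerm σ p 0) = lrmaxCount σ + if p = 0 then 1 else 0 := by
  rw [lrmaxCount_insPerm σ p 0 (fun j _ => Fin.zero_le _)]
  congr 1
  by_cases hp : p = 0
  · subst hp
    rw [if_pos rfl, if_pos]
    intro i hi
    exact absurd hi (by simp)
  · rw [if_neg hp, if_neg]
    intro h
    obtain ⟨j0, hj0⟩ := Fin.exists_succAbove_eq (show (0 : Fin (n+1)) ≠ p from Ne.symm hp)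
    have h0 : (0 : Fin (n+1)) < p := Fin.pos_iff_ne_zero.mpr hp
    have hv0 := insPerm_apply_succAbove σ p 0 j0
    rw [hj0] at hv0
    have h2 := h 0 h0
    rw [insPerm_apply_same, hv0, Fin.zero_succAbove] at h2
    exact absurd h2 (by simp)
  
lemma insPerm_zero_injective :
    Function.Injective
      (fun x : Fin (n + 1) × Perm (Fin n) => insPerm x.2 x.1 (0 : Fin (n+1))) := by
  rintro ⟨p, σ⟩ ⟨q, τ⟩ h
  simp only at h
  have hp : insPerm σ p 0 p = 0 := insPerm_apply_same σ p 0
  have hq : insPerm σ p 0 q = 0 := by rw [h]; exact insPerm_apply_same τ q 0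
  have hpq : p = q := (insPerm σ p 0).injective (hp.trans hq.symm)
  subst hpq
  have hσ : σ = τ := by
    apply Equiv.ext; intro j
    apply Fin.succAbove_right_injective (p := (0 : Fin (n+1)))
    have := congrArg (fun f : Perm (Fin (n+1)) => f (p.succAbove j)) h
    simpa using this
  rw [hσ]

lemma insPerm_zero_bijective :
    Function.Bijective
      (fun x : Fin (n + 1) × Perm (Fin n) => insPerm x.2 x.1 (0 : Fin (n+1))) := by
  rw [Fintype.bijective_iff_injective_and_card]
  refine ⟨insPerm_zero_injective, ?_⟩
  simp [Fintype.card_perm, Nat.factorial_succ]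

open Classical in
lemma Rsum_succ (k : ℕ) (θ : ℝ) : Rsum (k + 1) θ = (θ + k) * Rsum k θ := by
  rw [Rsum, ← Fintype.sum_bijective _ insPerm_zero_bijective _ _ (fun _ => rfl)]
  rw [Fintype.sum_prod_type]
  have hterm : ∀ (p : Fin (k+1)) (σ : Perm (Fin k)),
      θ ^ lrmaxCount (insPerm σ p 0)
        = (if p = 0 then θ else 1) * θ ^ lrmaxCount σ := by
    intro p σ
    rw [lrmaxCount_insPerm_zero]
    by_cases hp : p = 0 <;> simp [hp, pow_succ, mul_comm]
  calc ∑ p : Fin (k+1), ∑ σ : Perm (Fin k), θ ^ lrmaxCount (insPerm σ p 0)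
      = ∑ p : Fin (k+1), (if p = 0 then θ else 1) * Rsum k θ := by
        refine Finset.sum_congr rfl fun p _ => ?_
        rw [Rsum, Finset.mul_sum]
        exact Finset.sum_congr rfl fun σ _ => hterm p σ
    _ = (θ + k) * Rsum k θ := by
        rw [Fin.sum_univ_succ]
        simp [Fin.succ_ne_zero, Finset.sum_const, card_univ]
        ring

lemma Rsum_eq (k : ℕ) (θ : ℝ) : Rsum k θ = ∏ j ∈ Finset.range k, (θ + j) := by
  induction k with
  | zero => simp [Rsum_zero]
  | succ k ih =>
    rw [Rsum_succ, ih, Finset.prod_range_succ, mul_comm]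


/-! ### App A : deleting the last position -/

lemma succAbove_last_val {v : Fin (n + 2)} (hv : v ≠ Fin.last (n + 1)) :
    v.succAbove (Fin.last n) = Fin.last (n + 1) := by
  rw [Fin.succAbove_of_le_castSucc _ _ (Fin.le_castSucc_iff.mpr (by
    rw [Fin.succ_last]; exact Fin.lt_last_iff_ne_last.mpr hv)), Fin.succ_last]

lemma insPerm_last_apply_castSucc (σ : Perm (Fin (n + 1))) (v : Fin (n + 2)) (j : Fin (n + 1)) :
    insPerm σ (Fin.last (n + 1)) v j.castSucc = v.succAbove (σ j) := by
  rw [← Fin.succAbove_last, insPerm_apply_succAbove]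

lemma not_isLRMax_insPerm_last (σ : Perm (Fin (n + 1))) (v : Fin (n + 2))
    (hv : v ≠ Fin.last (n + 1)) :
    ¬ IsLRMax (insPerm σ (Fin.last (n + 1)) v) (Fin.last (n + 1)) := by
  intro h
  have h2 := h (σ⁻¹ (Fin.last n)).castSucc (Fin.castSucc_lt_last _)
  rw [insPerm_last_apply_castSucc, Equiv.Perm.apply_inv_self, insPerm_apply_same,
    succAbove_last_val hv] at h2
  exact absurd h2 (Fin.le_last v).not_gt

lemma insPerm_last_inv_top (σ : Perm (Fin (n + 1))) (v : Fin (n + 2))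
    (hv : v ≠ Fin.last (n + 1)) :
    (insPerm σ (Fin.last (n + 1)) v)⁻¹ (Fin.last (n + 1)) = (σ⁻¹ (Fin.last n)).castSucc := by
  apply (insPerm σ (Fin.last (n + 1)) v).injective
  rw [Equiv.Perm.apply_inv_self, insPerm_last_apply_castSucc, Equiv.Perm.apply_inv_self,
    succAbove_last_val hv]

lemma isLRMax_insPerm_last_iff (σ : Perm (Fin (n + 1))) (v : Fin (n + 2)) (j : Fin (n + 1)) :
    IsLRMax (insPerm σ (Fin.last (n + 1)) v) j.castSucc ↔ IsLRMax σ j := by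
  rw [← Fin.succAbove_last]
  exact isLRMax_insPerm_iff σ _ v j (fun h => absurd h (Fin.castSucc_lt_last j).not_ge)

lemma kWinnable_insPerm_last (σ : Perm (Fin (n + 1))) (v : Fin (n + 2))
    (hv : v ≠ Fin.last (n + 1)) (k : ℕ) :
    KWinnable k (insPerm σ (Fin.last (n + 1)) v) ↔ KWinnable k σ := by
  rw [kWinnable_iff, kWinnable_iff, insPerm_last_inv_top σ v hv]
  simp only [Fin.coe_castSucc]
  constructor
  · rintro ⟨h1, h2⟩
    refine ⟨h1, fun i hki hij => ?_⟩
    have := h2 i.castSucc (by simpa) (by rwa [Fin.castSucc_lt_castSucc_iff])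
    rwa [isLRMax_insPerm_last_iff] at this
  · rintro ⟨h1, h2⟩
    refine ⟨h1, fun i hki hij => ?_⟩
    have hil : i ≠ Fin.last (n + 1) := by
      rintro rfl
      exact absurd hij (Fin.castSucc_lt_last _).asymm
    obtain ⟨i', rfl⟩ := Fin.eq_castSucc_of_ne_last hil
    rw [isLRMax_insPerm_last_iff]
    exact h2 i' (by simpa using hki) (by rwa [Fin.castSucc_lt_castSucc_iff] at hij)


lemma sum_prod_filter_const {α β : Type*} [Fintype α] [Fintype β] {pa : α → Prop}
    {qb : β → Prop} [DecidablePred pa] [DecidablePred qb] (f : β → ℝ) :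
    ∑ x ∈ univ.filter (fun x : α × β => pa x.1 ∧ qb x.2), f x.2
      = (univ.filter pa).card * ∑ b ∈ univ.filter qb, f b := by
  rw [Finset.sum_filter, Fintype.sum_prod_type]
  have h : ∀ a : α, (∑ b, if pa a ∧ qb b then f b else 0)
      = if pa a then (∑ b ∈ univ.filter qb, f b) else 0 := by
    intro a
    by_cases h : pa a
    · simp [h, Finset.sum_filter]
    · simp [h]
  rw [Finset.sum_congr rfl fun a _ => h a, ← Finset.sum_filter, Finset.sum_const,
    nsmul_eq_mul]

/-! ### splitting W and case A -/

open Classical in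
noncomputable def Wa (n k : ℕ) (θ : ℝ) : ℝ :=
  ∑ π ∈ univ.filter (fun π : Perm (Fin (n + 1)) =>
      KWinnable k π ∧ π (Fin.last n) ≠ Fin.last n), θ ^ lrmaxCount π

open Classical in
noncomputable def Wb (n k : ℕ) (θ : ℝ) : ℝ :=
  ∑ π ∈ univ.filter (fun π : Perm (Fin (n + 1)) =>
      KWinnable k π ∧ π (Fin.last n) = Fin.last n), θ ^ lrmaxCount π

open Classical in
lemma W_split (n k : ℕ) (θ : ℝ) : W ℝ (n + 1) k θ = Wa n k θ + Wb n k θ := by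
  rw [W, Wa, Wb, Finset.sum_filter, Finset.sum_filter, Finset.sum_filter,
    ← Finset.sum_add_distrib]
  refine Finset.sum_congr rfl fun π _ => ?_
  by_cases h1 : KWinnable k π
  · by_cases h2 : π (Fin.last n) = Fin.last n <;> simp [h1, h2]
  · simp [h1]

open Classical in
lemma Wa_eq (n k : ℕ) (θ : ℝ) : Wa (n + 1) k θ = (n + 1 : ℝ) * W ℝ (n + 1) k θ := by
  rw [Wa, W]
  rw [sum_transfer (p := Fin.last (n + 1))
      (P := fun π => KWinnable k π ∧ π (Fin.last (n + 1)) ≠ Fin.last (n + 1))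
      (F := fun π => θ ^ lrmaxCount π)
      (Q := fun v σ => v ≠ Fin.last (n + 1) ∧ KWinnable k σ)
      (G := fun _ σ => θ ^ lrmaxCount σ) ?hPQ ?hFG]
  case hPQ =>
    intro v σ
    rw [insPerm_apply_same]
    constructor
    · rintro ⟨hw, hvne⟩; exact ⟨hvne, (kWinnable_insPerm_last σ v hvne k).mp hw⟩
    · rintro ⟨hvne, hw⟩; exact ⟨(kWinnable_insPerm_last σ v hvne k).mpr hw, hvne⟩
  case hFG =>
    rintro v σ ⟨hvne, -⟩
    rw [lrmaxCount_insPerm σ _ v (fun j h => absurd h (Fin.castSucc_lt_last j).not_ge),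
        if_neg (not_isLRMax_insPerm_last σ v hvne), add_zero]
  rw [sum_prod_filter_const (pa := fun v : Fin (n + 2) => v ≠ Fin.last (n + 1))
      (qb := fun σ : Perm (Fin (n + 1)) => KWinnable k σ) (fun σ => θ ^ lrmaxCount σ)]
  have hcard : (univ.filter (fun v : Fin (n + 2) => v ≠ Fin.last (n + 1))).card = n + 1 := by
    rw [Finset.filter_ne', Finset.card_erase_of_mem (mem_univ _), card_univ, Fintype.card_fin]
    omega
  rw [hcard]
  push_cast
  ring


/-! ### App B : permutations fixing the last position -/

lemma succAbove_eq_last_iff {v : Fin (n + 2)} {x : Fin (n + 1)} :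
    v.succAbove x = Fin.last (n + 1) ↔ x = Fin.last n ∧ v ≠ Fin.last (n + 1) := by
  constructor
  · intro h
    rcases lt_or_ge x.castSucc v with hlt | hle
    · rw [Fin.succAbove_of_castSucc_lt _ _ hlt] at h
      exact absurd h (Fin.castSucc_lt_last x).ne
    · rw [Fin.succAbove_of_le_castSucc _ _ hle, ← Fin.succ_last] at h
      have hx : x = Fin.last n := Fin.succ_inj.mp h
      subst hx
      refine ⟨rfl, fun hv => ?_⟩
      rw [hv] at hle
      exact absurd hle (Fin.castSucc_lt_last _).not_ge
  · rintro ⟨rfl, hv⟩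
    exact succAbove_last_val hv

lemma B_p_succAbove_last {m : ℕ} :
    ((Fin.last (m + 1)).castSucc).succAbove (Fin.last (m + 1)) = Fin.last (m + 2) := by
  rw [Fin.succAbove_of_le_castSucc _ _ le_rfl, Fin.succ_last]

lemma B_p_succAbove_of_ne {m : ℕ} {j : Fin (m + 2)} (hj : j ≠ Fin.last (m + 1)) :
    ((Fin.last (m + 1)).castSucc).succAbove j = j.castSucc :=
  Fin.succAbove_of_castSucc_lt _ _ (by
    rw [Fin.castSucc_lt_castSucc_iff]; exact Fin.lt_last_iff_ne_last.mpr hj)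

lemma B_H {m : ℕ} (σ : Perm (Fin (m + 2))) {v : Fin (m + 3)}
    (hσtop : σ (Fin.last (m + 1)) = Fin.last (m + 1)) (hvle : (v : ℕ) ≤ m + 1) :
    ∀ j : Fin (m + 2), (Fin.last (m + 1)).castSucc ≤ j.castSucc → v ≤ (σ j).castSucc := by
  intro j hj
  have hjl : j = Fin.last (m + 1) :=
    le_antisymm (Fin.le_last j) (by rwa [Fin.castSucc_le_castSucc_iff] at hj)
  rw [hjl, hσtop, Fin.le_def]
  simpa using hvle

lemma B_not_isLRMax {m : ℕ} (σ : Perm (Fin (m + 2))) (v : Fin (m + 3))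
    (hσtop : σ (Fin.last (m + 1)) = Fin.last (m + 1)) (hvlt : (v : ℕ) < m + 1) :
    ¬ IsLRMax (insPerm σ (Fin.last (m + 1)).castSucc v) ((Fin.last (m + 1)).castSucc) := by
  intro hLR
  set y : Fin (m + 2) := (Fin.last m).castSucc with hy
  have hyne : σ⁻¹ y ≠ Fin.last (m + 1) := by
    intro h
    have hyl : y = Fin.last (m + 1) := by
      conv_lhs => rw [← σ.apply_inv_self y, h, hσtop]
    exact absurd hyl (Fin.castSucc_lt_last _).ne
  have hlt : (σ⁻¹ y).castSucc < (Fin.last (m + 1)).castSucc := by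
    rw [Fin.castSucc_lt_castSucc_iff]
    exact Fin.lt_last_iff_ne_last.mpr hyne
  have h2 := hLR _ hlt
  rw [← B_p_succAbove_of_ne hyne, insPerm_apply_succAbove, Equiv.Perm.apply_inv_self,
    insPerm_apply_same] at h2
  have hvley : v ≤ y.castSucc := by
    rw [Fin.le_def]
    simpa [hy] using Nat.lt_succ_iff.mp hvlt
  rw [Fin.succAbove_of_le_castSucc _ _ hvley] at h2
  rw [Fin.lt_def] at h2
  simp [hy] at h2
  omega

open Classical in
lemma B_transfer {m : ℕ} (k : ℕ) (hk : k ≤ m + 1) (σ : Perm (Fin (m + 2)))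
    (v : Fin (m + 3)) :
    (KWinnable k (insPerm σ (Fin.last (m + 1)).castSucc v)
        ∧ insPerm σ (Fin.last (m + 1)).castSucc v (Fin.last (m + 2)) = Fin.last (m + 2))
    ↔ ((v : ℕ) < m + 1
        ∧ (KWinnable k σ ∧ σ (Fin.last (m + 1)) = Fin.last (m + 1))) := by
  have happ : insPerm σ (Fin.last (m + 1)).castSucc v (Fin.last (m + 2))
      = v.succAbove (σ (Fin.last (m + 1))) := by
    conv_lhs => rw [← B_p_succAbove_last]
    rw [insPerm_apply_succAbove]
  constructor
  · rintro ⟨hw, htop⟩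
    rw [happ] at htop
    obtain ⟨hσtop, hvne⟩ := succAbove_eq_last_iff.mp htop
    have hvle : (v : ℕ) ≤ m + 1 := by
      have h1 := v.isLt
      have h2 : (v : ℕ) ≠ m + 2 := fun h => hvne (Fin.ext (by simpa using h))
      omega
    have hπtop : insPerm σ (Fin.last (m + 1)).castSucc v (Fin.last (m + 2))
        = Fin.last (m + 2) := by
      rw [happ, hσtop]
      exact succAbove_last_val hvne
    have hπinv : (insPerm σ (Fin.last (m + 1)).castSucc v)⁻¹ (Fin.last (m + 2))
        = Fin.last (m + 2) :=
      (insPerm σ (Fin.last (m + 1)).castSucc v).injective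
        (by rw [Equiv.Perm.apply_inv_self, hπtop])
    rw [kWinnable_iff, hπinv] at hw
    obtain ⟨-, hwint⟩ := hw
    have hvlt : (v : ℕ) < m + 1 := by
      by_contra hcon
      have hvval : (v : ℕ) = m + 1 := by omega
      apply hwint ((Fin.last (m + 1)).castSucc) (by simpa using hk) (Fin.castSucc_lt_last _)
      intro i hi
      obtain ⟨i', hi'⟩ := Fin.exists_succAbove_eq hi.ne
      have hi'ne : i' ≠ Fin.last (m + 1) := by
        rintro rfl
        rw [B_p_succAbove_last] at hi'
        rw [← hi'] at hi
        exact absurd hi (Fin.castSucc_lt_last _).asymm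
      have hσine : σ i' ≠ Fin.last (m + 1) := fun h =>
        hi'ne (σ.injective (h.trans hσtop.symm))
      rw [← hi', insPerm_apply_succAbove, insPerm_apply_same]
      have hcs : (σ i').castSucc < v := by
        have hv2 := Fin.lt_last_iff_ne_last.mpr hσine
        rw [Fin.lt_def] at hv2 ⊢
        simp only [Fin.coe_castSucc]
        simp only [Fin.val_last] at hv2
        omega
      rw [Fin.succAbove_of_castSucc_lt _ _ hcs]
      exact hcs
    refine ⟨hvlt, ?_, hσtop⟩
    have hσinv : σ⁻¹ (Fin.last (m + 1)) = Fin.last (m + 1) :=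
      σ.injective (by rw [Equiv.Perm.apply_inv_self, hσtop])
    rw [kWinnable_iff, hσinv]
    refine ⟨by simpa using hk, fun i hki hil => ?_⟩
    have hine : i ≠ Fin.last (m + 1) := hil.ne
    rw [← isLRMax_insPerm_iff σ ((Fin.last (m + 1)).castSucc) v i (B_H σ hσtop hvle i)]
    apply hwint (((Fin.last (m + 1)).castSucc).succAbove i)
    · rw [B_p_succAbove_of_ne hine]
      simpa using hki
    · rw [B_p_succAbove_of_ne hine]
      exact Fin.castSucc_lt_last _
  · rintro ⟨hvlt, hwσ, hσtop⟩
    have hvne : v ≠ Fin.last (m + 2) := by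
      intro h
      rw [h] at hvlt
      simp only [Fin.val_last] at hvlt
      omega
    have htop : insPerm σ (Fin.last (m + 1)).castSucc v (Fin.last (m + 2))
        = Fin.last (m + 2) := by
      rw [happ, hσtop]
      exact succAbove_last_val hvne
    refine ⟨?_, htop⟩
    have hπinv : (insPerm σ (Fin.last (m + 1)).castSucc v)⁻¹ (Fin.last (m + 2))
        = Fin.last (m + 2) :=
      (insPerm σ (Fin.last (m + 1)).castSucc v).injective
        (by rw [Equiv.Perm.apply_inv_self, htop])
    rw [kWinnable_iff, hπinv]
    refine ⟨by simp only [Fin.val_last]; omega, fun i hki hil => ?_⟩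
    rcases eq_or_ne i ((Fin.last (m + 1)).castSucc) with rfl | hip
    · exact B_not_isLRMax σ v hσtop hvlt
    · obtain ⟨i', hi'⟩ := Fin.exists_succAbove_eq hip
      have hi'ne : i' ≠ Fin.last (m + 1) := by
        rintro rfl
        rw [B_p_succAbove_last] at hi'
        rw [← hi'] at hil
        exact absurd hil (lt_irrefl _)
      rw [← hi', isLRMax_insPerm_iff σ _ v i' (B_H σ hσtop (Nat.le_of_lt hvlt) i')]
      have hσinv : σ⁻¹ (Fin.last (m + 1)) = Fin.last (m + 1) :=
        σ.injective (by rw [Equiv.Perm.apply_inv_self, hσtop])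
      rw [kWinnable_iff, hσinv] at hwσ
      apply hwσ.2 i'
      · rw [← hi', B_p_succAbove_of_ne hi'ne] at hki
        simpa using hki
      · exact Fin.lt_last_iff_ne_last.mpr hi'ne

open Classical in
lemma B_lrmax {m : ℕ} (σ : Perm (Fin (m + 2))) (v : Fin (m + 3))
    (hσtop : σ (Fin.last (m + 1)) = Fin.last (m + 1)) (hvlt : (v : ℕ) < m + 1) :
    lrmaxCount (insPerm σ (Fin.last (m + 1)).castSucc v) = lrmaxCount σ := by
  rw [lrmaxCount_insPerm σ _ v (B_H σ hσtop (Nat.le_of_lt hvlt)),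
    if_neg (B_not_isLRMax σ v hσtop hvlt), add_zero]

lemma sum_filter_congr_real {α : Type*} [Fintype α] {p q : α → Prop} [DecidablePred p]
    [DecidablePred q] (h : ∀ a, p a ↔ q a) (f : α → ℝ) :
    ∑ a ∈ univ.filter p, f a = ∑ a ∈ univ.filter q, f a := by
  rw [Finset.sum_filter, Finset.sum_filter]
  exact Finset.sum_congr rfl fun a _ => if_congr (h a) rfl rfl

open Classical in
lemma Wb_succ (m k : ℕ) (hk : k ≤ m + 1) (θ : ℝ) :
    Wb (m + 2) k θ = (m + 1 : ℝ) * Wb (m + 1) k θ := by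
  rw [Wb, Wb]
  rw [sum_transfer (p := (Fin.last (m + 1)).castSucc)
      (P := fun π : Perm (Fin (m + 3)) =>
        KWinnable k π ∧ π (Fin.last (m + 2)) = Fin.last (m + 2))
      (F := fun π => θ ^ lrmaxCount π)
      (Q := fun v σ => (v : ℕ) < m + 1
        ∧ (KWinnable k σ ∧ σ (Fin.last (m + 1)) = Fin.last (m + 1)))
      (G := fun _ σ => θ ^ lrmaxCount σ)
      (fun v σ => B_transfer k hk σ v)
      (fun v σ hq => by rw [B_lrmax σ v hq.2.2 hq.1])]
  rw [sum_prod_filter_const (pa := fun v : Fin (m + 3) => (v : ℕ) < m + 1)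
      (qb := fun σ : Perm (Fin (m + 2)) =>
        KWinnable k σ ∧ σ (Fin.last (m + 1)) = Fin.last (m + 1))
      (fun σ => θ ^ lrmaxCount σ)]
  have hcard : (univ.filter (fun v : Fin (m + 3) => (v : ℕ) < m + 1)).card = m + 1 := by
    have he : univ.filter (fun v : Fin (m + 3) => (v : ℕ) < m + 1)
        = Finset.Iio (⟨m + 1, by omega⟩ : Fin (m + 3)) := by
      ext v
      simp [Fin.lt_def]
    rw [he, Fin.card_Iio]
  rw [hcard]
  push_cast
  ring_nf

open Classical in
lemma Wb_base (k : ℕ) (θ : ℝ) : Wb k k θ = θ * Rsum k θ := by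
  rw [Wb]
  rw [sum_transfer (p := Fin.last k)
      (P := fun π : Perm (Fin (k + 1)) => KWinnable k π ∧ π (Fin.last k) = Fin.last k)
      (F := fun π => θ ^ lrmaxCount π)
      (Q := fun v _ => v = Fin.last k)
      (G := fun _ σ => θ ^ (lrmaxCount σ + 1)) ?hPQ ?hFG]
  · rw [Finset.sum_filter, Fintype.sum_prod_type]
    have h1 : ∀ v : Fin (k + 1),
        (∑ σ : Perm (Fin k), if v = Fin.last k then θ ^ (lrmaxCount σ + 1) else 0)
          = if v = Fin.last k then θ * Rsum k θ else 0 := by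
      intro v
      by_cases h : v = Fin.last k
      · subst h
        rw [if_pos rfl, Rsum, Finset.mul_sum]
        refine Finset.sum_congr rfl fun σ _ => ?_
        rw [if_pos rfl, pow_succ]
        ring
      · simp [h]
    rw [Finset.sum_congr rfl fun v _ => h1 v,
      Finset.sum_ite_eq' univ (Fin.last k) (fun _ => θ * Rsum k θ), if_pos (mem_univ _)]
  case hPQ =>
    intro v σ
    rw [insPerm_apply_same]
    constructor
    · rintro ⟨-, hv⟩; exact hv
    · rintro rfl
      refine ⟨?_, rfl⟩
      rw [kWinnable_iff]
      have hinv : (insPerm σ (Fin.last k) (Fin.last k))⁻¹ (Fin.last k) = Fin.last k :=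
        (insPerm σ (Fin.last k) (Fin.last k)).injective
          (by rw [Equiv.Perm.apply_inv_self, insPerm_apply_same])
      rw [hinv]
      refine ⟨by simp, fun i hki hil => ?_⟩
      exfalso
      rw [Fin.lt_def] at hil
      simp only [Fin.val_last] at hil
      omega
  case hFG =>
    intro v σ hq
    subst hq
    have hLR : IsLRMax (insPerm σ (Fin.last k) (Fin.last k)) (Fin.last k) := by
      intro i hi
      obtain ⟨i', rfl⟩ := Fin.eq_castSucc_of_ne_last hi.ne
      rw [insPerm_apply_same, ← Fin.succAbove_last, insPerm_apply_succAbove,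
        Fin.succAbove_last]
      exact Fin.castSucc_lt_last _
    rw [lrmaxCount_insPerm σ _ _ (fun j h => absurd h (Fin.castSucc_lt_last j).not_ge),
      if_pos hLR]

lemma Wb_eq (n k : ℕ) (hk1 : 1 ≤ k) (hkn : k ≤ n) (θ : ℝ) :
    Wb n k θ = ((Nat.factorial (n - 1) : ℝ) / (Nat.factorial (k - 1) : ℝ)) * θ
      * ∏ j ∈ Finset.range k, (θ + j) := by
  induction n, hkn using Nat.le_induction with
  | base =>
    rw [Wb_base, Rsum_eq, div_self (by exact_mod_cast Nat.factorial_ne_zero (k - 1)), one_mul]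
  | succ n hkn ih =>
    obtain ⟨m, rfl⟩ : ∃ m, n = m + 1 := ⟨n - 1, by omega⟩
    rw [Wb_succ m k (by omega), ih]
    simp only [Nat.add_sub_cancel]
    rw [Nat.factorial_succ]
    push_cast
    ring

end EwensAux

open EwensAux Equiv Finset

/-- recurrence for the Ewens-weighted count `W(N,k)`:
`W(N,k) = (N−1)·W(N−1,k) + ((N−2)!/(k−1)!)·θ·θ(θ+1)⋯(θ+k−1)` for `1 ≤ k < N`,
with `W(1,0) = θ` and `W(N,N) = 0`. -/
theorem ewens_W_recurrence :
    (∀ N k : ℕ, ∀ θ : ℝ, 1 ≤ k → k < N →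
      W ℝ N k θ = ((N : ℝ) - 1) * W ℝ (N - 1) k θ +
        ((Nat.factorial (N - 2) : ℝ) / (Nat.factorial (k - 1) : ℝ)) * θ *
          ∏ j ∈ Finset.range k, (θ + j)) ∧
    (∀ θ : ℝ, W ℝ 1 0 θ = θ) ∧
    (∀ N : ℕ, ∀ θ : ℝ, W ℝ N N θ = 0) := by
  classical
  refine ⟨?_, ?_, ?_⟩
  · intro N k θ hk1 hkN
    obtain ⟨M, rfl⟩ : ∃ M, N = M + 2 := ⟨N - 2, by omega⟩
    rw [show M + 2 - 1 = M + 1 from rfl, show M + 2 - 2 = M from rfl]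
    rw [W_split (M + 1) k θ, Wa_eq M k θ, Wb_eq (M + 1) k hk1 (by omega) θ]
    simp only [Nat.add_sub_cancel]
    push_cast
    ring
  · intro θ
    rw [W]
    have hall : ∀ π : Perm (Fin 1), KWinnable 0 π := by
      intro π
      refine ⟨0, Nat.zero_le _, ?_, ?_, ?_⟩
      · intro i hi
        exact absurd hi (by rw [Fin.lt_def]; simp)
      · intro i
        have hi : i = 0 := Subsingleton.elim i 0
        rw [hi]
      · intro i hki hi
        exact absurd hi (by rw [Fin.lt_def]; simp)
    rw [Finset.filter_true_of_mem (fun π _ => hall π)]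
    have hlr : ∀ π : Perm (Fin 1), lrmaxCount π = 1 := by
      intro π
      rw [lrmaxCount, Finset.filter_true_of_mem]
      · simp
      · intro j _ i hi
        have h1 := i.isLt
        have h2 := j.isLt
        rw [Fin.lt_def] at hi
        omega
    simp only [hlr, pow_one]
    rw [Finset.sum_const, card_univ, Fintype.card_perm]
    simp
  · intro N θ
    rw [W, Finset.filter_false_of_mem, Finset.sum_empty]
    rintro π - ⟨j, hkj, -, -, -⟩
    have := j.isLt
    omega
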